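/- Let Γ be a distance-regular graph with valency k, diameter D, and intersection numbers aᵢ, bᵢ, cᵢ. Then aᵢ ≥ a₁ + 1 - min{bᵢ, cᵢ} for all 1 ≤ i ≤ D-1. -/

import Mathlib

open SimpleGraph

/-- If `dist x y = n+1` then `y` has a neighbor at distance `n` from `x`. -/
lemma exists_adj_dist {V : Type*} {G : SimpleGraph V} (hc : G.Connected) {x y : V} {n : ℕ}
    (h : G.dist x y = n + 1) : ∃ z, G.Adj z y ∧ G.dist x z = n := by
  obtain ⟨p, hp⟩ := (hc x y).exists_walk_length_eq_dist
  have hq : p.reverse.length = n + 1 := by rw [Walk.length_reverse, hp, h]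
  have hnnil : ¬ p.reverse.Nil := by
    rw [Walk.not_nil_iff_lt_length]; omega
  set z := p.reverse.getVert 1 with hz
  have hadj : G.Adj y z := p.reverse.adj_snd hnnil
  have htl : p.reverse.tail.length = n := by
    have := Walk.length_tail_add_one hnnil
    omega
  have h1 : G.dist x z ≤ n := by
    rw [SimpleGraph.dist_comm]
    calc G.dist z x ≤ p.reverse.tail.length := SimpleGraph.dist_le _
    _ = n := htl
  have h2 : G.dist x y ≤ G.dist x z + 1 := by
    have hzy : G.dist z y = 1 := SimpleGraph.dist_eq_one_iff_adj.2 hadj.symm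
    have := hc.dist_triangle (u := x) (v := z) (w := y)
    omega
  exact ⟨z, hadj.symm, by omega⟩

/-- From a pair at distance `n`, pairs at all distances `j ≤ n` exist. -/
lemma exists_dist_eq' {V : Type*} {G : SimpleGraph V} (hc : G.Connected) :
    ∀ (n : ℕ) (x y : V), G.dist x y = n → ∀ j ≤ n, ∃ z, G.dist x z = j := by
  intro n
  induction n with
  | zero => intro x y _ j hj; exact ⟨x, by simpa [Nat.le_zero.1 hj] using G.dist_self⟩
  | succ n ih =>
    intro x y hxy j hj
    rcases Nat.lt_or_ge j (n + 1) with hlt | hge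
    · obtain ⟨z, _, hz⟩ := exists_adj_dist hc hxy
      exact ih x z hz j (by omega)
    · exact ⟨y, by omega⟩

/-- `G` is a distance-regular graph with diameter `D` and intersection numbers
`c i`, `a i`, `b i`. -/
def IsDRG {V : Type*} [Fintype V] (G : SimpleGraph V) (D : ℕ) (c a b : ℕ → ℕ) : Prop :=
  G.Connected ∧ (∀ x y : V, G.dist x y ≤ D) ∧ (∃ x y : V, G.dist x y = D) ∧
  ∀ (x y : V) (i : ℕ), G.dist x y = i → i ≤ D →
    ({z : V | G.Adj y z ∧ G.dist x z + 1 = i}.ncard = c i ∧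
     {z : V | G.Adj y z ∧ G.dist x z = i}.ncard = a i ∧
     {z : V | G.Adj y z ∧ G.dist x z = i + 1}.ncard = b i)

/-- `aᵢ ≥ a₁ + 1 - min{bᵢ, cᵢ}` for `1 ≤ i ≤ D-1`
(stated additively, as `a₁ + 1 ≤ aᵢ + min{bᵢ, cᵢ}`). -/
theorem stmt_15 {V : Type*} [Fintype V] (G : SimpleGraph V) (k D : ℕ)
    (c a b : ℕ → ℕ) (hD : 1 ≤ D) (hk : k = b 0)
    (hdrg : IsDRG G D c a b) :
    ∀ i, 1 ≤ i → i ≤ D - 1 → a 1 + 1 ≤ a i + min (b i) (c i) := by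
  obtain ⟨hconn, hle, ⟨x0, y0, hx0⟩, hprop⟩ := hdrg
  intro i hi1 hiD
  have hiD' : i + 1 ≤ D := by omega
  -- a pair (x, y') at distance i+1, and y adjacent to y' with dist x y = i
  obtain ⟨y', hy'⟩ := exists_dist_eq' hconn D x0 y0 hx0 (i + 1) hiD'
  obtain ⟨y, hyy', hxy⟩ := exists_adj_dist hconn hy'
  set x := x0 with hxdef
  -- m : neighbor of y at distance i - 1 from x
  obtain ⟨m, hmy, hxm⟩ := exists_adj_dist hconn (show G.dist x y = (i - 1) + 1 by omega)
  -- intersection sets around (x, y)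
  obtain ⟨hC, hA, hB⟩ := hprop x y i hxy (by omega)
  set A := {z : V | G.Adj y z ∧ G.dist x z = i} with hAdef
  set B := {z : V | G.Adj y z ∧ G.dist x z = i + 1} with hBdef
  set Cs := {z : V | G.Adj y z ∧ G.dist x z + 1 = i} with hCdef
  -- the a₁ sets for the edges (y, y') and (y, m)
  have hdyy' : G.dist y y' = 1 := SimpleGraph.dist_eq_one_iff_adj.2 hyy'
  have hdym : G.dist y m = 1 := SimpleGraph.dist_eq_one_iff_adj.2 hmy.symm
  obtain ⟨-, hSb, -⟩ := hprop y y' 1 hdyy' hD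
  obtain ⟨-, hSc, -⟩ := hprop y m 1 hdym hD
  have hSb' : {w : V | G.Adj y' w ∧ G.Adj y w}.ncard = a 1 := by
    rw [← hSb]; congr 1; ext w
    simp [SimpleGraph.dist_eq_one_iff_adj]
  have hSc' : {w : V | G.Adj m w ∧ G.Adj y w}.ncard = a 1 := by
    rw [← hSc]; congr 1; ext w
    simp [SimpleGraph.dist_eq_one_iff_adj]
  -- first inequality: a 1 + 1 ≤ a i + b i
  have hy'B : y' ∈ B := ⟨hyy', hy'⟩
  have hb_pos : 1 ≤ b i := by
    rw [← hB]
    exact (Set.ncard_pos (Set.toFinite _)).2 ⟨y', hy'B⟩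
  have hsub1 : {w : V | G.Adj y' w ∧ G.Adj y w} ⊆ A ∪ (B \ {y'}) := by
    rintro w ⟨hwy', hwy⟩
    have h1 : G.dist x w ≤ i + 1 := by
      have := hconn.dist_triangle (u := x) (v := y) (w := w)
      have : G.dist y w = 1 := SimpleGraph.dist_eq_one_iff_adj.2 hwy
      have := hconn.dist_triangle (u := x) (v := y) (w := w)
      omega
    have h2 : i ≤ G.dist x w := by
      have hwyd : G.dist w y' = 1 := SimpleGraph.dist_eq_one_iff_adj.2 hwy'.symm
      have := hconn.dist_triangle (u := x) (v := w) (w := y')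
      omega
    rcases Nat.eq_or_lt_of_le h2 with heq | hlt
    · exact Or.inl ⟨hwy, heq.symm⟩
    · exact Or.inr ⟨⟨hwy, by omega⟩, by simp [hwy'.ne']⟩
  have hineq1 : a 1 + 1 ≤ a i + b i := by
    have hcard : {w : V | G.Adj y' w ∧ G.Adj y w}.ncard ≤ A.ncard + (B \ {y'}).ncard := by
      calc {w : V | G.Adj y' w ∧ G.Adj y w}.ncard
          ≤ (A ∪ (B \ {y'})).ncard := Set.ncard_le_ncard hsub1 (Set.toFinite _)
        _ ≤ A.ncard + (B \ {y'}).ncard := Set.ncard_union_le _ _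
    have hdiff : (B \ {y'}).ncard = B.ncard - 1 :=
      Set.ncard_diff_singleton_of_mem hy'B
    rw [hSb', hA, hdiff, hB] at hcard
    omega
  -- second inequality: a 1 + 1 ≤ a i + c i
  have hmC : m ∈ Cs := ⟨hmy.symm, by omega⟩
  have hc_pos : 1 ≤ c i := by
    rw [← hC]
    exact (Set.ncard_pos (Set.toFinite _)).2 ⟨m, hmC⟩
  have hsub2 : {w : V | G.Adj m w ∧ G.Adj y w} ⊆ A ∪ (Cs \ {m}) := by
    rintro w ⟨hwm, hwy⟩
    have h1 : G.dist x w ≤ i := by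
      have hmwd : G.dist m w = 1 := SimpleGraph.dist_eq_one_iff_adj.2 hwm
      have := hconn.dist_triangle (u := x) (v := m) (w := w)
      omega
    have h2 : i - 1 ≤ G.dist x w := by
      have hwyd : G.dist w y = 1 := SimpleGraph.dist_eq_one_iff_adj.2 hwy.symm
      have := hconn.dist_triangle (u := x) (v := w) (w := y)
      omega
    rcases Nat.lt_or_ge (G.dist x w) i with hlt | hge
    · exact Or.inr ⟨⟨hwy, by omega⟩, by simp [hwm.ne']⟩
    · exact Or.inl ⟨hwy, by omega⟩
  have hineq2 : a 1 + 1 ≤ a i + c i := by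
    have hcard : {w : V | G.Adj m w ∧ G.Adj y w}.ncard ≤ A.ncard + (Cs \ {m}).ncard := by
      calc {w : V | G.Adj m w ∧ G.Adj y w}.ncard
          ≤ (A ∪ (Cs \ {m})).ncard := Set.ncard_le_ncard hsub2 (Set.toFinite _)
        _ ≤ A.ncard + (Cs \ {m}).ncard := Set.ncard_union_le _ _
    have hdiff : (Cs \ {m}).ncard = Cs.ncard - 1 :=
      Set.ncard_diff_singleton_of_mem hmC
    rw [hSc', hA, hdiff, hC] at hcard
    omega
  omega
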